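/- Let D be an essentially small triangulated category, D_0 ⊂ D a dense strictly full triangulated subcategory, and E an object of D with [E] lying in the image of K(D_0) → K(D). Then E is an object of D_0. -/

import Mathlib

/-!
STATEMENT 17 (Thomason, nontrivial direction): For an essentially small
triangulated category D, a dense strictly full triangulated subcategory D₀ ⊂ D, and an
object E whose class [E] lies in the image of K(D₀) → K(D), one has E ∈ D₀.
-/

open CategoryTheory Limits Pretriangulated

universe v u

variable (C : Type u) [Category.{v} C] [Preadditive C] [HasZeroObject C]
  [HasShift C ℤ] [∀ n : ℤ, (shiftFunctor C n).Additive] [Pretriangulated C]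

/-- The subgroup of relations defining the Grothendieck group of a triangulated
category: `[B] = [A] + [C]` for every distinguished triangle `A → B → C`. -/
def K0Relations : AddSubgroup (FreeAbelianGroup C) :=
  AddSubgroup.closure {x | ∃ T : Triangle C, (T ∈ distTriang C) ∧
    x = FreeAbelianGroup.of T.obj₂ - FreeAbelianGroup.of T.obj₁ - FreeAbelianGroup.of T.obj₃}

/-- The Grothendieck group `K(D)` of a triangulated category. -/
def K0 : Type u := FreeAbelianGroup C ⧸ K0Relations C

instance : AddCommGroup (K0 C) :=
  inferInstanceAs (AddCommGroup (FreeAbelianGroup C ⧸ K0Relations C))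

/-- The class `[X]` of an object in the Grothendieck group. -/
def K0.cls (X : C) : K0 C := QuotientAddGroup.mk' (K0Relations C) (FreeAbelianGroup.of X)

namespace Triangulated

/-- The structure `Triangulated.Subcategory` as it stood in Mathlib of December 2024. -/
structure Subcategory where
  P : C → Prop
  zero' : ∃ (Z : C) (_ : IsZero Z), P Z
  shift (X : C) (n : ℤ) : P X → P (X⟦n⟧)
  ext₂' (T : Triangle C) (_ : T ∈ distTriang C) : P T.obj₁ → P T.obj₃ →
    ObjectProperty.isoClosure P T.obj₂

end Triangulated

/-- Relations for the Grothendieck group of a (strictly full) triangulated subcategory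
`S`: distinguished triangles of `D` with all three vertices in `S`. -/
def K0SubRelations (S : Triangulated.Subcategory C) :
    AddSubgroup (FreeAbelianGroup {X : C // S.P X}) :=
  AddSubgroup.closure {x | ∃ (T : Triangle C) (_ : T ∈ distTriang C)
    (h₁ : S.P T.obj₁) (h₂ : S.P T.obj₂) (h₃ : S.P T.obj₃),
    x = FreeAbelianGroup.of ⟨T.obj₂, h₂⟩ - FreeAbelianGroup.of ⟨T.obj₁, h₁⟩ -
      FreeAbelianGroup.of ⟨T.obj₃, h₃⟩}

/-- The Grothendieck group `K(D₀)` of a (strictly full) triangulated subcategory. -/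
def K0Sub (S : Triangulated.Subcategory C) : Type u :=
  FreeAbelianGroup {X : C // S.P X} ⧸ K0SubRelations C S

instance (S : Triangulated.Subcategory C) : AddCommGroup (K0Sub C S) :=
  inferInstanceAs (AddCommGroup (FreeAbelianGroup {X : C // S.P X} ⧸ K0SubRelations C S))

/-- The natural map `K(D₀) → K(D)` on Grothendieck groups induced by the inclusion of a
triangulated subcategory. -/
def K0.ofSub (S : Triangulated.Subcategory C) : K0Sub C S →+ K0 C :=
  QuotientAddGroup.lift _ (FreeAbelianGroup.lift fun X : {X : C // S.P X} => K0.cls C X.1)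
    (by
      intro x hx
      have hle : K0SubRelations C S ≤
          (FreeAbelianGroup.lift fun X : {X : C // S.P X} => K0.cls C X.1).ker := by
        rw [K0SubRelations, AddSubgroup.closure_le]
        rintro y ⟨T, hT, h₁, h₂, h₃, rfl⟩
        simp only [SetLike.mem_coe, AddMonoidHom.mem_ker, map_sub,
          FreeAbelianGroup.lift_apply_of]
        show K0.cls C T.obj₂ - K0.cls C T.obj₁ - K0.cls C T.obj₃ = 0
        simp only [K0.cls, ← map_sub, QuotientAddGroup.mk'_apply]
        exact (QuotientAddGroup.eq_zero_iff _).2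
          (AddSubgroup.subset_closure ⟨T, hT, rfl⟩)
      exact hle hx)

namespace Triangulated.Subcategory

variable {C}
variable (S : Triangulated.Subcategory C) [ObjectProperty.IsClosedUnderIsomorphisms S.P]

open ZeroObject in
lemma zero : S.P 0 := by
  obtain ⟨Z, hZ, h⟩ := S.zero'
  exact ObjectProperty.prop_of_iso S.P hZ.isoZero h

lemma ext₂ (T : Triangle C) (hT : T ∈ distTriang C) (h₁ : S.P T.obj₁) (h₃ : S.P T.obj₃) :
    S.P T.obj₂ := by
  obtain ⟨Y, hY, ⟨e⟩⟩ := S.ext₂' T hT h₁ h₃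
  exact ObjectProperty.prop_of_iso S.P e.symm hY

lemma ext₃ (T : Triangle C) (hT : T ∈ distTriang C) (h₁ : S.P T.obj₁) (h₂ : S.P T.obj₂) :
    S.P T.obj₃ :=
  S.ext₂ T.rotate (rot_of_distTriang _ hT) h₂ (S.shift _ 1 h₁)

end Triangulated.Subcategory

noncomputable section
namespace ThomasonAux
set_option linter.unusedSectionVars false

open Limits ZeroObject

variable {C}
variable (S : Triangulated.Subcategory C) [ObjectProperty.IsClosedUnderIsomorphisms S.P]

lemma mem_of_iso (P : C → Prop) [ObjectProperty.IsClosedUnderIsomorphisms P] {X Y : C}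
    (e : X ≅ Y) (h : P X) : P Y :=
  ObjectProperty.prop_of_iso P e h

lemma psum {a b : C} (ha : S.P a) (hb : S.P b) : S.P (a ⊞ b) :=
  S.ext₂ _ (binaryBiproductTriangle_distinguished a b) ha hb

lemma pcancel {a x : C} (ha : S.P a) (h : S.P (x ⊞ a)) : S.P x :=
  S.ext₃ _ (binaryBiproductTriangle_distinguished a x) ha
    (mem_of_iso S.P (biprod.braiding x a) h)

variable {S}

/-- Kill a zero summand on the right. -/
def isoZeroRight {Z : C} (hZ : IsZero Z) (X : C) : X ⊞ Z ≅ X where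
  hom := biprod.fst
  inv := biprod.inl
  hom_inv_id := by
    apply biprod.hom_ext
    · simp
    · apply hZ.eq_of_tgt
  inv_hom_id := by simp

/-- Kill a zero summand on the left. -/
def isoZeroLeft {Z : C} (hZ : IsZero Z) (X : C) : Z ⊞ X ≅ X :=
  biprod.braiding Z X ≪≫ isoZeroRight hZ X

/-- Middle-four exchange for biproducts. -/
def exch (A B A' B' : C) : (A ⊞ B) ⊞ (A' ⊞ B') ≅ (A ⊞ A') ⊞ (B ⊞ B') :=
  biprod.associator _ _ _ ≪≫
    biprod.mapIso (Iso.refl A)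
      ((biprod.associator _ _ _).symm ≪≫
        biprod.mapIso (biprod.braiding B A') (Iso.refl B') ≪≫ biprod.associator _ _ _) ≪≫
    (biprod.associator _ _ _).symm

/-- Swap the two outer summands. -/
def swapHead (A P Q : C) : A ⊞ (P ⊞ Q) ≅ P ⊞ (A ⊞ Q) :=
  (biprod.associator _ _ _).symm ≪≫
    biprod.mapIso (biprod.braiding A P) (Iso.refl Q) ≪≫ biprod.associator _ _ _

/-- The relation defining the Grothendieck-type quotient group of `C` modulo `S`. -/
def grel (X Y : C) : Prop := ∃ a b : C, S.P a ∧ S.P b ∧ Nonempty (X ⊞ a ≅ Y ⊞ b)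

variable (S)

lemma grel_of_iso {X Y : C} (e : X ≅ Y) : grel (S := S) X Y :=
  ⟨0, 0, S.zero, S.zero, ⟨biprod.mapIso e (Iso.refl 0)⟩⟩

lemma grel_refl (X : C) : grel (S := S) X X := grel_of_iso S (Iso.refl X)

lemma grel_symm {X Y : C} (h : grel (S := S) X Y) : grel (S := S) Y X := by
  obtain ⟨a, b, ha, hb, ⟨e⟩⟩ := h
  exact ⟨b, a, hb, ha, ⟨e.symm⟩⟩

lemma grel_trans {X Y Z : C} (h : grel (S := S) X Y) (h' : grel (S := S) Y Z) :
    grel (S := S) X Z := by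
  obtain ⟨a, b, ha, hb, ⟨e⟩⟩ := h
  obtain ⟨c, d, hc, hd, ⟨e'⟩⟩ := h'
  refine ⟨a ⊞ c, d ⊞ b, psum S ha hc, psum S hd hb, ⟨?_⟩⟩
  calc X ⊞ (a ⊞ c) ≅ (X ⊞ a) ⊞ c := (biprod.associator _ _ _).symm
    _ ≅ (Y ⊞ b) ⊞ c := biprod.mapIso e (Iso.refl c)
    _ ≅ (Y ⊞ c) ⊞ b := biprod.associator _ _ _ ≪≫
          biprod.mapIso (Iso.refl Y) (biprod.braiding b c) ≪≫ (biprod.associator _ _ _).symm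
    _ ≅ (Z ⊞ d) ⊞ b := biprod.mapIso e' (Iso.refl b)
    _ ≅ Z ⊞ (d ⊞ b) := biprod.associator _ _ _

/-- The setoid associated to `grel`. -/
def gsetoid : Setoid C := ⟨grel (S := S), ⟨grel_refl S, grel_symm S, grel_trans S⟩⟩

/-- The quotient "Grothendieck group of `C` modulo the dense subcategory `S`". -/
def G := _root_.Quotient (gsetoid S)

/-- projection to the quotient. -/
def mkG (X : C) : G S := _root_.Quotient.mk (gsetoid S) X

lemma grel_add {X X' Y Y' : C} (hX : grel (S := S) X X') (hY : grel (S := S) Y Y') :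
    grel (S := S) (X ⊞ Y) (X' ⊞ Y') := by
  obtain ⟨a, b, ha, hb, ⟨e⟩⟩ := hX
  obtain ⟨c, d, hc, hd, ⟨e'⟩⟩ := hY
  exact ⟨a ⊞ c, b ⊞ d, psum S ha hc, psum S hb hd,
    ⟨exch X Y a c ≪≫ biprod.mapIso e e' ≪≫ (exch X' Y' b d).symm⟩⟩

/-- Addition on the quotient. -/
def gadd : G S → G S → G S :=
  Quotient.map₂ (· ⊞ ·) (fun _ _ hX _ _ hY => grel_add S hX hY)

instance : Zero (G S) := ⟨mkG S 0⟩
instance : Add (G S) := ⟨gadd S⟩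

variable (hdense : ∀ X : C, ∃ Y : C, S.P (X ⊞ Y))

/-- A chosen additive inverse representative. -/
def negRep (X : C) : C := (hdense X).choose

lemma negRep_spec (X : C) : S.P (X ⊞ negRep S hdense X) := (hdense X).choose_spec

lemma grel_neg {X X' : C} (hX : grel (S := S) X X') :
    grel (S := S) (negRep S hdense X) (negRep S hdense X') := by
  obtain ⟨a, b, ha, hb, ⟨e⟩⟩ := hX
  set Y := negRep S hdense X with hY
  set Y' := negRep S hdense X' with hY'
  refine ⟨(X' ⊞ Y') ⊞ b, (X ⊞ Y) ⊞ a, psum S (negRep_spec S hdense X') hb,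
    psum S (negRep_spec S hdense X) ha, ⟨?_⟩⟩
  calc Y ⊞ ((X' ⊞ Y') ⊞ b)
      ≅ Y ⊞ ((Y' ⊞ X') ⊞ b) :=
        biprod.mapIso (Iso.refl Y) (biprod.mapIso (biprod.braiding X' Y') (Iso.refl b))
    _ ≅ Y ⊞ (Y' ⊞ (X' ⊞ b)) := biprod.mapIso (Iso.refl Y) (biprod.associator _ _ _)
    _ ≅ Y' ⊞ (Y ⊞ (X' ⊞ b)) := swapHead _ _ _
    _ ≅ Y' ⊞ (Y ⊞ (X ⊞ a)) := biprod.mapIso (Iso.refl Y') (biprod.mapIso (Iso.refl Y) e.symm)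
    _ ≅ Y' ⊞ ((Y ⊞ X) ⊞ a) := biprod.mapIso (Iso.refl Y') (biprod.associator _ _ _).symm
    _ ≅ Y' ⊞ ((X ⊞ Y) ⊞ a) :=
        biprod.mapIso (Iso.refl Y') (biprod.mapIso (biprod.braiding Y X) (Iso.refl a))

/-- Negation on the quotient. -/
def gneg : G S → G S :=
  Quotient.map (negRep S hdense) (fun _ _ h => grel_neg S hdense h)

/-- The group structure on the quotient. -/
def gGroup : AddCommGroup (G S) :=
  letI : Neg (G S) := ⟨gneg S hdense⟩
  { add := gadd S
    zero := mkG S 0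
    neg := gneg S hdense
    nsmul := nsmulRec
    zsmul := zsmulRec
    add_assoc := by
      rintro ⟨X⟩ ⟨Y⟩ ⟨Z⟩
      exact Quotient.sound (grel_of_iso S (biprod.associator X Y Z))
    zero_add := by
      rintro ⟨X⟩
      exact Quotient.sound (grel_of_iso S (isoZeroLeft (isZero_zero C) X))
    add_zero := by
      rintro ⟨X⟩
      exact Quotient.sound (grel_of_iso S (isoZeroRight (isZero_zero C) X))
    add_comm := by
      rintro ⟨X⟩ ⟨Y⟩
      exact Quotient.sound (grel_of_iso S (biprod.braiding X Y))
    neg_add_cancel := by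
      rintro ⟨X⟩
      refine Quotient.sound ⟨0, X ⊞ negRep S hdense X, S.zero, negRep_spec S hdense X, ⟨?_⟩⟩
      calc (negRep S hdense X ⊞ X) ⊞ 0
          ≅ negRep S hdense X ⊞ X := isoZeroRight (isZero_zero C) _
        _ ≅ X ⊞ negRep S hdense X := biprod.braiding _ _
        _ ≅ 0 ⊞ (X ⊞ negRep S hdense X) := (isoZeroLeft (isZero_zero C) _).symm }

/-- A three-entry family. -/
def prodIso3 (g : Fin 3 → C) : (∏ᶜ g) ≅ (g 0 ⊞ g 1) ⊞ g 2 where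
  hom := biprod.lift (biprod.lift (Pi.π g 0) (Pi.π g 1)) (Pi.π g 2)
  inv := Pi.lift (fun j => match j with
    | ⟨0, _⟩ => biprod.fst ≫ biprod.fst
    | ⟨1, _⟩ => biprod.fst ≫ biprod.snd
    | ⟨2, _⟩ => biprod.snd)
  hom_inv_id := by
    apply limit.hom_ext
    rintro ⟨j⟩
    fin_cases j <;> simp
  inv_hom_id := by
    apply biprod.hom_ext
    · apply biprod.hom_ext <;> simp
    · simp

/-- Thomason's key lemma: stability of `S` under forming the "middle" of a direct sum of
triangles. -/
lemma keyLemma (T : Triangle C) (hT : T ∈ distTriang C) {a b : C}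
    (h1 : S.P (T.obj₁ ⊞ a)) (h3 : S.P (T.obj₃ ⊞ b)) : S.P ((T.obj₂ ⊞ a) ⊞ b) := by
  let F : Fin 3 → Triangle C := fun j => match j with
    | ⟨0, _⟩ => T
    | ⟨1, _⟩ => contractibleTriangle a
    | ⟨2, _⟩ => (contractibleTriangle b).invRotate
  have hF : ∀ j, F j ∈ distTriang C := fun j => match j with
    | ⟨0, _⟩ => hT
    | ⟨1, _⟩ => contractible_distinguished a
    | ⟨2, _⟩ => inv_rot_of_distTriang _ (contractible_distinguished b)
  have hP := productTriangle_distinguished F hF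
  have hzero : IsZero ((0 : C)⟦(-1 : ℤ)⟧) := (shiftFunctor C (-1 : ℤ)).map_isZero (isZero_zero C)
  have e1 : (productTriangle F).obj₁ ≅ T.obj₁ ⊞ a :=
    prodIso3 (fun j => (F j).obj₁) ≪≫ isoZeroRight hzero _
  have e2 : (productTriangle F).obj₂ ≅ (T.obj₂ ⊞ a) ⊞ b :=
    prodIso3 (fun j => (F j).obj₂)
  have e3 : (productTriangle F).obj₃ ≅ T.obj₃ ⊞ b :=
    prodIso3 (fun j => (F j).obj₃) ≪≫
      biprod.mapIso (isoZeroRight (isZero_zero C) _) (Iso.refl b)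
  have h2 := S.ext₂ _ hP (mem_of_iso S.P e1.symm h1) (mem_of_iso S.P e3.symm h3)
  exact mem_of_iso S.P e2 h2

include hdense in
lemma grel_triangle (T : Triangle C) (hT : T ∈ distTriang C) :
    grel (S := S) T.obj₂ (T.obj₁ ⊞ T.obj₃) := by
  obtain ⟨a, ha⟩ := hdense T.obj₁
  obtain ⟨c, hc⟩ := hdense T.obj₃
  refine ⟨(T.obj₁ ⊞ a) ⊞ (T.obj₃ ⊞ c), (T.obj₂ ⊞ a) ⊞ c, psum S ha hc,
    keyLemma S T hT ha hc, ⟨?_⟩⟩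
  calc T.obj₂ ⊞ ((T.obj₁ ⊞ a) ⊞ (T.obj₃ ⊞ c))
      ≅ T.obj₂ ⊞ ((T.obj₁ ⊞ T.obj₃) ⊞ (a ⊞ c)) :=
        biprod.mapIso (Iso.refl _) (exch _ _ _ _)
    _ ≅ (T.obj₁ ⊞ T.obj₃) ⊞ (T.obj₂ ⊞ (a ⊞ c)) := swapHead _ _ _
    _ ≅ (T.obj₁ ⊞ T.obj₃) ⊞ ((T.obj₂ ⊞ a) ⊞ c) :=
        biprod.mapIso (Iso.refl _) (biprod.associator _ _ _).symm

lemma grel_zero_of_mem {X : C} (hX : S.P X) : grel (S := S) X 0 :=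
  ⟨0, X, S.zero, hX, ⟨isoZeroRight (isZero_zero C) X ≪≫ (isoZeroLeft (isZero_zero C) X).symm⟩⟩

end ThomasonAux
end

theorem stmt17 [EssentiallySmall.{v} C] (S : Triangulated.Subcategory C)
    [ObjectProperty.IsClosedUnderIsomorphisms S.P]
    (hdense : ∀ X : C, ∃ Y : C, S.P (X ⊞ Y)) (E : C)
    (hE : K0.cls C E ∈ (K0.ofSub C S).range) :
    S.P E := by
  classical
  open ThomasonAux ZeroObject Limits in
  letI : AddCommGroup (G S) := gGroup S hdense
  let φ : FreeAbelianGroup C →+ G S := FreeAbelianGroup.lift (mkG S)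
  have hφof : ∀ X : C, φ (FreeAbelianGroup.of X) = mkG S X :=
    fun X => FreeAbelianGroup.lift_apply_of _ _
  have haddG : ∀ X Y : C, mkG S (X ⊞ Y) = mkG S X + mkG S Y := fun _ _ => rfl
  have hker : K0Relations C ≤ φ.ker := by
    rw [K0Relations, AddSubgroup.closure_le]
    rintro y ⟨T, hT, rfl⟩
    simp only [SetLike.mem_coe, AddMonoidHom.mem_ker, map_sub, hφof]
    have h2 : mkG S T.obj₂ = mkG S T.obj₁ + mkG S T.obj₃ :=
      (Quotient.sound (grel_triangle S hdense T hT)).trans (haddG _ _)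
    rw [h2]
    abel
  let φbar : K0 C →+ G S := QuotientAddGroup.lift (K0Relations C) φ hker
  have hφbar : ∀ X : C, φbar (K0.cls C X) = mkG S X := fun X => hφof X
  obtain ⟨w, hw⟩ := hE
  have h1 : ∀ u : FreeAbelianGroup {X : C // S.P X},
      φbar (FreeAbelianGroup.lift (fun X : {X : C // S.P X} => K0.cls C X.1) u) = 0 := by
    intro u
    induction u using FreeAbelianGroup.induction_on with
    | zero => simp; exact map_zero φbar
    | of x =>
      rw [FreeAbelianGroup.lift_apply_of, hφbar]
      exact Quotient.sound (grel_zero_of_mem S x.2)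
    | neg x hx => rw [map_neg, map_neg, hx]; exact neg_zero
    | add x y hx hy => rw [map_add, map_add, hx, hy]; exact add_zero 0
  have h0 : φbar (K0.cls C E) = 0 := by
    rw [← hw]
    obtain ⟨u, rfl⟩ := QuotientAddGroup.mk'_surjective (K0SubRelations C S) w
    exact h1 u
  rw [hφbar] at h0
  have hrel : grel (S := S) E 0 := Quotient.exact h0
  obtain ⟨a, b, ha, hb, ⟨e⟩⟩ := hrel
  have hEa : S.P (E ⊞ a) :=
    mem_of_iso S.P (e ≪≫ isoZeroLeft (Limits.isZero_zero C) b).symm hb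
  exact pcancel S ha hEa
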